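/- Let a > 0, γ ≥ 1, and 0 < ε ≤ 1 be reals, and let f(y) = a·y^{γ+1}. Consider the posted-price mechanism that offers item j at price a·(γ+1)²·(s + 1/ε)^γ when s units of item j have been sold so far, and let α = (1+ε)^γ·(γ+1)^{(γ+1)/γ}. Then for every run of this mechanism on any sequence of buyers and for every fractional allocation x, the welfare W of the mechanism satisfies W ≥ (1/α)·(welfare of x) − m·((1/α)·f*(f′(2/ε)) + f(1/ε − 1)). -/

import Mathlib

open Finset

/-- Convex conjugate of `f` restricted to `[0, ∞)`: `f*(q) = sup_{z ≥ 0} (q·z − f(z))`. -/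
noncomputable def conj (f : ℝ → ℝ) (q : ℝ) : ℝ :=
  sSup ((fun z => q * z - f z) '' Set.Ici 0)

/-- Number of units of item `j` sold to the buyers arriving strictly before time `i`,
under the allocation `S`. -/
def soldCount {m n : ℕ} (S : Fin n → Finset (Fin m)) (j : Fin m) (i : ℕ) : ℕ :=
  (Finset.univ.filter (fun i' : Fin n => (i' : ℕ) < i ∧ j ∈ S i')).card


lemma tangent_rpow {p u w : ℝ} (hp : 1 ≤ p) (hu : 0 ≤ u) (hw : 0 < w) :
    w ^ p + p * w ^ (p - 1) * (u - w) ≤ u ^ p := by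
  have hz : -1 ≤ u / w - 1 := by
    have : 0 ≤ u / w := div_nonneg hu hw.le
    linarith
  have hb := one_add_mul_self_le_rpow_one_add hz hp
  have h1 : (1 : ℝ) + (u / w - 1) = u / w := by ring
  rw [h1, Real.div_rpow hu hw.le] at hb
  have hwp : 0 < w ^ p := Real.rpow_pos_of_pos hw p
  have hb' : w ^ p * (1 + p * (u / w - 1)) ≤ u ^ p := by
    rw [mul_comm, ← le_div_iff₀ hwp]; exact hb
  have hkey : w ^ p * (1 + p * (u / w - 1)) = w ^ p + p * w ^ (p - 1) * (u - w) := by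
    have hwp1 : w ^ (p - 1) = w ^ p / w := by
      rw [Real.rpow_sub hw, Real.rpow_one]
    rw [hwp1]; field_simp
  linarith [hkey ▸ hb']

/-- For `γ ≥ 1` (in fact `γ+1 ≥ 1`) and `b ≥ 1`: `b^(γ+1) - (b-1)^(γ+1) ≤ (γ+1)*b^γ`. -/
lemma key1 {γ b : ℝ} (hγ : 1 ≤ γ) (hb : 1 ≤ b) :
    b ^ (γ + 1) - (b - 1) ^ (γ + 1) ≤ (γ + 1) * b ^ γ := by
  have hb0 : 0 < b := lt_of_lt_of_le one_pos hb
  have h := tangent_rpow (p := γ + 1) (u := b - 1) (w := b) (by linarith) (by linarith) hb0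
  have hsimp : γ + 1 - 1 = γ := by ring
  rw [hsimp] at h
  nlinarith [h]

section sold
variable {m n : ℕ} (S : Fin n → Finset (Fin m)) (j : Fin m)

lemma soldCount_lt (i : Fin n) (k : ℕ) (hik : (i : ℕ) < k) (hjS : j ∈ S i) :
    soldCount S j i < soldCount S j k := by
  apply Finset.card_lt_card
  constructor
  · intro i' hi'
    simp only [mem_filter, mem_univ, true_and] at *
    exact ⟨lt_trans hi'.1 hik, hi'.2⟩
  · intro hsub
    have := hsub (by simp [hik, hjS] : i ∈ Finset.univ.filter (fun i' : Fin n => (i' : ℕ) < k ∧ j ∈ S i'))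
    simp only [mem_filter, mem_univ, true_and] at this
    exact absurd this.1 (lt_irrefl _)

lemma soldCount_le (i k : ℕ) (hik : i ≤ k) : soldCount S j i ≤ soldCount S j k := by
  apply Finset.card_le_card
  intro i' hi'
  simp only [mem_filter, mem_univ, true_and] at *
  exact ⟨lt_of_lt_of_le hi'.1 hik, hi'.2⟩

lemma soldCount_card :
    soldCount S j n = (Finset.univ.filter (fun i : Fin n => j ∈ S i)).card := by
  unfold soldCount
  congr 1
  apply Finset.filter_congr
  intro i _
  simp [i.isLt]

lemma soldCount_sum (g : ℕ → ℝ) :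
    ∑ i ∈ Finset.univ.filter (fun i : Fin n => j ∈ S i), g (soldCount S j i) =
      ∑ s ∈ Finset.range (soldCount S j n), g s := by
  set A := Finset.univ.filter (fun i : Fin n => j ∈ S i) with hA
  have hinj : Set.InjOn (fun i : Fin n => soldCount S j i) A := by
    intro i₁ h₁ i₂ h₂ heq
    simp only [hA, coe_filter, Set.mem_setOf_eq, mem_univ, true_and] at h₁ h₂
    by_contra hne
    rcases lt_or_gt_of_ne (fun h : (i₁ : ℕ) = (i₂ : ℕ) => hne (Fin.ext h)) with h | h
    · exact absurd heq (Nat.ne_of_lt (soldCount_lt S j i₁ i₂ h h₁))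
    · exact absurd heq.symm (Nat.ne_of_lt (soldCount_lt S j i₂ i₁ h h₂))
  have himg : A.image (fun i : Fin n => soldCount S j i) = Finset.range (soldCount S j n) := by
    apply Finset.eq_of_subset_of_card_le
    · intro s hs
      simp only [mem_image] at hs
      obtain ⟨i, hi, rfl⟩ := hs
      simp only [hA, mem_filter, mem_univ, true_and] at hi
      exact Finset.mem_range.2 (soldCount_lt S j i n i.isLt hi)
    · rw [Finset.card_range, Finset.card_image_of_injOn hinj, soldCount_card]
  rw [← himg, Finset.sum_image (fun i hi i' hi' h => hinj (by simpa using hi) (by simpa using hi') h)]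
end sold

/-- Young-type bound: `y·φ − a·y^(γ+1) ≤ γ·a·(γ+1)^((γ+1)/γ)·B^(γ+1)` where
`φ = a·(γ+1)²·B^γ`. -/
lemma youngA {a γ B y : ℝ} (ha : 0 < a) (hγ : 1 ≤ γ) (hB : 0 < B) (hy : 0 ≤ y) :
    y * (a * (γ+1)^2 * B ^ γ) - a * y ^ (γ+1) ≤ γ * a * (γ+1) ^ ((γ+1)/γ) * B ^ (γ+1) := by
  have hγ0 : (0:ℝ) < γ := by linarith
  have hγ1 : (0:ℝ) < γ + 1 := by linarith
  set w : ℝ := (γ+1) ^ (1/γ) * B with hw_def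
  have hwpos : 0 < w := mul_pos (Real.rpow_pos_of_pos hγ1 _) hB
  have hA1 : ((γ+1:ℝ) ^ (1/γ)) ^ γ = γ + 1 := by
    rw [← Real.rpow_mul hγ1.le, one_div, inv_mul_cancel₀ hγ0.ne', Real.rpow_one]
  have hA2 : ((γ+1:ℝ) ^ (1/γ)) ^ (γ+1) = (γ+1) ^ ((γ+1)/γ) := by
    rw [← Real.rpow_mul hγ1.le, one_div, inv_mul_eq_div]
  have hwγ : w ^ γ = (γ+1) * B ^ γ := by
    rw [hw_def, Real.mul_rpow (Real.rpow_nonneg hγ1.le _) hB.le, hA1]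
  have hwγ1 : w ^ (γ+1) = (γ+1) ^ ((γ+1)/γ) * B ^ (γ+1) := by
    rw [hw_def, Real.mul_rpow (Real.rpow_nonneg hγ1.le _) hB.le, hA2]
  have hwsucc : w ^ (γ+1) = w ^ γ * w := by
    rw [Real.rpow_add_one hwpos.ne']
  have htan := tangent_rpow (p := γ+1) (u := y) (w := w) (by linarith) hy hwpos
  have hsimp : γ + 1 - 1 = γ := by ring
  rw [hsimp] at htan
  have h2 := mul_le_mul_of_nonneg_left htan ha.le
  have h2' : a*w^(γ+1) + y*(a*(γ+1)^2*B^γ) - a*(γ+1)*w^(γ+1) ≤ a*y^(γ+1) := by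
    calc a*w^(γ+1) + y*(a*(γ+1)^2*B^γ) - a*(γ+1)*w^(γ+1)
        = a * (w^(γ+1) + (γ+1) * w^γ * (y - w)) := by rw [hwsucc, hwγ]; ring
      _ ≤ a*y^(γ+1) := h2
  have hgoal : γ * a * (γ+1) ^ ((γ+1)/γ) * B ^ (γ+1) = γ * a * w ^ (γ+1) := by
    rw [hwγ1]; ring
  rw [hgoal]
  linarith [h2']

/-- The conjugate of `a·z^(γ+1)` at `q = a·(γ+1)·c^γ` equals `γ·a·c^(γ+1)`. -/
lemma conj_eq {a γ c : ℝ} (ha : 0 < a) (hγ : 1 ≤ γ) (hc : 0 < c) :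
    conj (fun z => a * z ^ (γ+1)) (a * (γ+1) * c ^ γ) = γ * a * c ^ (γ+1) := by
  have hub : ∀ z : ℝ, 0 ≤ z →
      (a * (γ+1) * c ^ γ) * z - a * z ^ (γ+1) ≤ γ * a * c ^ (γ+1) := by
    intro z hz
    have htan := tangent_rpow (p := γ+1) (u := z) (w := c) (by linarith) hz hc
    have hsimp : γ + 1 - 1 = γ := by ring
    rw [hsimp] at htan
    have h2 := mul_le_mul_of_nonneg_left htan ha.le
    have hcsucc : c ^ (γ+1) = c ^ γ * c := Real.rpow_add_one hc.ne' γ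
    rw [hcsucc] at h2 ⊢
    linarith
  have hmem : γ * a * c ^ (γ+1) ∈ ((fun z => (a * (γ+1) * c ^ γ) * z - a * z ^ (γ+1)) '' Set.Ici 0) := by
    refine ⟨c, hc.le, ?_⟩
    show (a * (γ+1) * c ^ γ) * c - a * c ^ (γ+1) = γ * a * c ^ (γ+1)
    rw [Real.rpow_add_one hc.ne']; ring
  apply le_antisymm
  · apply csSup_le ⟨_, hmem⟩
    rintro b ⟨z, hz, rfl⟩
    exact hub z hz
  · apply le_csSup
    · exact ⟨γ * a * c ^ (γ+1), by rintro b ⟨z, hz, rfl⟩; exact hub z hz⟩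
    · exact hmem

/-- Lower bound for mechanism revenue on one item by double telescoping. -/
lemma revenue_lb {a γ ε : ℝ} (ha : 0 < a) (hγ : 1 ≤ γ) (hε0 : 0 < ε) (hε1 : ε ≤ 1) (Y : ℕ) :
    (a * ((Y:ℝ) + 1/ε - 1) ^ (γ+1) - a * (1/ε - 1) ^ (γ+1))
      + (γ * a / (1+ε) ^ γ) * (((Y:ℝ) + 1/ε) ^ (γ+1) - (1/ε) ^ (γ+1))
      ≤ ∑ s ∈ Finset.range Y, a * (γ+1)^2 * ((s:ℝ) + 1/ε) ^ γ := by
  have hc1 : (1:ℝ) ≤ 1/ε := by rw [le_div_iff₀ hε0]; linarith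
  have hεγpos : (0:ℝ) < (1+ε) ^ γ := Real.rpow_pos_of_pos (by linarith) γ
  set f₁ : ℕ → ℝ := fun s => a * ((s:ℝ) + 1/ε - 1) ^ (γ+1) with hf₁
  set f₂ : ℕ → ℝ := fun s => (γ * a / (1+ε) ^ γ) * (((s:ℝ) + 1/ε) ^ (γ+1)) with hf₂
  have ht₁ : ∑ s ∈ Finset.range Y, (f₁ (s+1) - f₁ s) = f₁ Y - f₁ 0 := Finset.sum_range_sub f₁ Y
  have ht₂ : ∑ s ∈ Finset.range Y, (f₂ (s+1) - f₂ s) = f₂ Y - f₂ 0 := Finset.sum_range_sub f₂ Y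
  have hterm : ∀ s ∈ Finset.range Y,
      (f₁ (s+1) - f₁ s) + (f₂ (s+1) - f₂ s) ≤ a * (γ+1)^2 * ((s:ℝ) + 1/ε) ^ γ := by
    intro s _
    set b : ℝ := (s:ℝ) + 1/ε with hb
    have hb1 : (1:ℝ) ≤ b := by
      have : (0:ℝ) ≤ (s:ℝ) := Nat.cast_nonneg s
      simp only [hb]; linarith
    have hb0 : (0:ℝ) < b := by linarith
    have hcast : ((s+1:ℕ):ℝ) = (s:ℝ) + 1 := by push_cast; ring
    have hd₁ : f₁ (s+1) - f₁ s = a * (b ^ (γ+1) - (b-1) ^ (γ+1)) := by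
      simp only [hf₁, hcast, hb]; ring_nf
    have hk₁ : b ^ (γ+1) - (b-1) ^ (γ+1) ≤ (γ+1) * b ^ γ := key1 hγ hb1
    have hk₂ : (b+1) ^ (γ+1) - b ^ (γ+1) ≤ (γ+1) * (b+1) ^ γ := by
      have := key1 (γ := γ) (b := b+1) hγ (by linarith)
      simpa using this
    have hmono : (b+1) ^ γ ≤ (1+ε) ^ γ * b ^ γ := by
      have hle : b + 1 ≤ (1+ε) * b := by
        have hεb : (1:ℝ) ≤ ε * b := by
          have h1 : ε * (1/ε) = 1 := by field_simp
          have h2 : ε * ((s:ℝ) + 1/ε) = ε * (s:ℝ) + ε * (1/ε) := by ring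
          have h3 : 0 ≤ ε * (s:ℝ) := mul_nonneg hε0.le (Nat.cast_nonneg s)
          rw [hb, h2, h1]; linarith
        have : (1+ε) * b = b + ε * b := by ring
        linarith
      calc (b+1) ^ γ ≤ ((1+ε) * b) ^ γ :=
            Real.rpow_le_rpow (by linarith) hle (by linarith)
        _ = (1+ε) ^ γ * b ^ γ := Real.mul_rpow (by linarith) hb0.le
    have hd₂ : f₂ (s+1) - f₂ s = (γ * a / (1+ε) ^ γ) * ((b+1) ^ (γ+1) - b ^ (γ+1)) := by
      simp only [hf₂, hcast, hb]; ring_nf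
    have hca : 0 ≤ γ * a / (1+ε) ^ γ := by positivity
    have h₂' : (γ * a / (1+ε) ^ γ) * ((b+1) ^ (γ+1) - b ^ (γ+1))
        ≤ (γ * a / (1+ε) ^ γ) * ((γ+1) * ((1+ε) ^ γ * b ^ γ)) := by
      apply mul_le_mul_of_nonneg_left _ hca
      calc (b+1) ^ (γ+1) - b ^ (γ+1) ≤ (γ+1) * (b+1) ^ γ := hk₂
        _ ≤ (γ+1) * ((1+ε) ^ γ * b ^ γ) := by
            apply mul_le_mul_of_nonneg_left hmono (by linarith)
    have heq : (γ * a / (1+ε) ^ γ) * ((γ+1) * ((1+ε) ^ γ * b ^ γ)) = γ * a * (γ+1) * b ^ γ := by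
      field_simp
    rw [hd₁, hd₂]
    have h₁' : a * (b ^ (γ+1) - (b-1) ^ (γ+1)) ≤ a * ((γ+1) * b ^ γ) :=
      mul_le_mul_of_nonneg_left hk₁ ha.le
    have hfin : a * ((γ+1) * b ^ γ) + γ * a * (γ+1) * b ^ γ = a * (γ+1)^2 * b ^ γ := by ring
    linarith [h₂', heq ▸ h₂']
  calc (a * ((Y:ℝ) + 1/ε - 1) ^ (γ+1) - a * (1/ε - 1) ^ (γ+1))
        + (γ * a / (1+ε) ^ γ) * (((Y:ℝ) + 1/ε) ^ (γ+1) - (1/ε) ^ (γ+1))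
      = (f₁ Y - f₁ 0) + (f₂ Y - f₂ 0) := by simp only [hf₁, hf₂]; push_cast; ring
    _ = ∑ s ∈ Finset.range Y, ((f₁ (s+1) - f₁ s) + (f₂ (s+1) - f₂ s)) := by
        rw [Finset.sum_add_distrib, ht₁, ht₂]
    _ ≤ ∑ s ∈ Finset.range Y, a * (γ+1)^2 * ((s:ℝ) + 1/ε) ^ γ := Finset.sum_le_sum hterm

/-- The per-item inequality. -/
lemma peritem {a γ ε : ℝ} (ha : 0 < a) (hγ : 1 ≤ γ) (hε0 : 0 < ε) (hε1 : ε ≤ 1)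
    (Y : ℕ) (y : ℝ) (hy : 0 ≤ y) :
    (1 / ((1+ε) ^ γ * (γ+1) ^ ((γ+1)/γ))) *
        (y * (a * (γ+1)^2 * ((Y:ℝ) + 1/ε) ^ γ) - a * y ^ (γ+1))
      - ((1 / ((1+ε) ^ γ * (γ+1) ^ ((γ+1)/γ))) * (γ * a * (2/ε) ^ (γ+1))
          + a * (1/ε - 1) ^ (γ+1))
    ≤ (∑ s ∈ Finset.range Y, a * (γ+1)^2 * ((s:ℝ) + 1/ε) ^ γ) - a * (Y:ℝ) ^ (γ+1) := by
  have hγ1 : (0:ℝ) < γ + 1 := by linarith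
  have hc1 : (1:ℝ) ≤ 1/ε := by rw [le_div_iff₀ hε0]; linarith
  have hE : (0:ℝ) < (1+ε) ^ γ := Real.rpow_pos_of_pos (by linarith) γ
  have hD : (0:ℝ) < (γ+1) ^ ((γ+1)/γ) := Real.rpow_pos_of_pos hγ1 _
  have hB : (0:ℝ) < (Y:ℝ) + 1/ε := by
    have : (0:ℝ) ≤ (Y:ℝ) := Nat.cast_nonneg Y
    linarith
  -- Young step
  have h1 : y * (a * (γ+1)^2 * ((Y:ℝ) + 1/ε) ^ γ) - a * y ^ (γ+1)
      ≤ γ * a * (γ+1) ^ ((γ+1)/γ) * ((Y:ℝ) + 1/ε) ^ (γ+1) := youngA ha hγ hB hy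
  have hinv : (0:ℝ) ≤ 1 / ((1+ε) ^ γ * (γ+1) ^ ((γ+1)/γ)) := by positivity
  have h1' := mul_le_mul_of_nonneg_left h1 hinv
  have h2 : (1 / ((1+ε) ^ γ * (γ+1) ^ ((γ+1)/γ))) *
      (γ * a * (γ+1) ^ ((γ+1)/γ) * ((Y:ℝ) + 1/ε) ^ (γ+1))
      = γ * a / (1+ε) ^ γ * ((Y:ℝ) + 1/ε) ^ (γ+1) := by
    field_simp
  -- revenue lower bound
  have h3 := revenue_lb ha hγ hε0 hε1 Y
  -- cost comparison
  have h4 : a * (Y:ℝ) ^ (γ+1) ≤ a * ((Y:ℝ) + 1/ε - 1) ^ (γ+1) := by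
    apply mul_le_mul_of_nonneg_left _ ha.le
    exact Real.rpow_le_rpow (Nat.cast_nonneg Y) (by linarith) (by linarith)
  -- constant comparison
  have h5 : γ * a / (1+ε) ^ γ * (1/ε) ^ (γ+1)
      ≤ (1 / ((1+ε) ^ γ * (γ+1) ^ ((γ+1)/γ))) * (γ * a * (2/ε) ^ (γ+1)) := by
    have h2c : (2/ε : ℝ) = 2 * (1/ε) := by ring
    have hsplit : (2/ε : ℝ) ^ (γ+1) = 2 ^ (γ+1) * (1/ε) ^ (γ+1) := by
      rw [h2c, Real.mul_rpow (by norm_num) (by linarith)]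
    have hD2 : (γ+1) ^ ((γ+1)/γ) ≤ 2 ^ (γ+1) := by
      have hb : γ + 1 ≤ 2 ^ γ := by
        have := one_add_mul_self_le_rpow_one_add (s := (1:ℝ)) (by norm_num) hγ
        norm_num at this
        linarith
      calc (γ+1) ^ ((γ+1)/γ) ≤ (2 ^ γ) ^ ((γ+1)/γ) :=
            Real.rpow_le_rpow hγ1.le hb (by positivity)
        _ = 2 ^ (γ+1) := by
            rw [← Real.rpow_mul (by norm_num)]
            congr 1
            field_simp
    rw [hsplit]
    have hrhs : (1 / ((1+ε) ^ γ * (γ+1) ^ ((γ+1)/γ))) * (γ * a * (2 ^ (γ+1) * (1/ε) ^ (γ+1)))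
        = (γ * a * (2 ^ (γ+1) * (1/ε) ^ (γ+1))) / ((1+ε) ^ γ * (γ+1) ^ ((γ+1)/γ)) := by
      ring
    rw [hrhs, div_mul_eq_mul_div, div_le_div_iff₀ hE (by positivity)]
    nlinarith [mul_le_mul_of_nonneg_left hD2
      (by positivity : (0:ℝ) ≤ γ * a * (1/ε) ^ (γ+1) * (1+ε) ^ γ)]
  rw [h2] at h1'
  have hexp : γ * a / (1+ε) ^ γ * (((Y:ℝ) + 1/ε) ^ (γ+1) - (1/ε) ^ (γ+1))
      = γ * a / (1+ε) ^ γ * ((Y:ℝ) + 1/ε) ^ (γ+1) - γ * a / (1+ε) ^ γ * (1/ε) ^ (γ+1) := by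
    ring
  rw [hexp] at h3
  linarith


theorem stmt7 (m n : ℕ) (a γ ε : ℝ) (ha : 0 < a) (hγ : 1 ≤ γ) (hε0 : 0 < ε) (hε1 : ε ≤ 1)
    (v : Fin n → Finset (Fin m) → ℝ)
    (hv0 : ∀ i, v i ∅ = 0)
    (hvnn : ∀ i T, 0 ≤ v i T)
    (S : Fin n → Finset (Fin m))
    (hrun : ∀ i : Fin n, ∀ T : Finset (Fin m),
      v i (S i) - ∑ j ∈ S i, a * (γ+1)^2 * ((soldCount S j i : ℝ) + 1/ε) ^ γ ≥
        v i T - ∑ j ∈ T, a * (γ+1)^2 * ((soldCount S j i : ℝ) + 1/ε) ^ γ)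
    (x : Fin n → Finset (Fin m) → ℝ)
    (hxnn : ∀ i T, 0 ≤ x i T)
    (hxle : ∀ i, ∑ T : Finset (Fin m), x i T ≤ 1) :
    (∑ i, v i (S i)) - ∑ j, a * ((soldCount S j n : ℝ)) ^ (γ+1) ≥
      (1 / ((1+ε) ^ γ * (γ+1) ^ ((γ+1)/γ))) *
        ((∑ i, ∑ T : Finset (Fin m), v i T * x i T) -
          ∑ j, a * (∑ i, ∑ T ∈ Finset.univ.filter (fun T : Finset (Fin m) => j ∈ T), x i T) ^ (γ+1))
      - (m : ℝ) * ((1 / ((1+ε) ^ γ * (γ+1) ^ ((γ+1)/γ))) *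
            conj (fun z => a * z ^ (γ+1)) (a * (γ+1) * (2/ε) ^ γ)
          + a * (1/ε - 1) ^ (γ+1)) := by
  have hγ1 : (0:ℝ) < γ + 1 := by linarith
  have hE : (0:ℝ) < (1+ε) ^ γ := Real.rpow_pos_of_pos (by linarith) γ
  have hD : (0:ℝ) < (γ+1) ^ ((γ+1)/γ) := Real.rpow_pos_of_pos hγ1 _
  have hαpos : (0:ℝ) < (1+ε) ^ γ * (γ+1) ^ ((γ+1)/γ) := mul_pos hE hD
  have hinv0 : (0:ℝ) ≤ 1 / ((1+ε) ^ γ * (γ+1) ^ ((γ+1)/γ)) := by positivity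
  have hα1 : (1:ℝ) ≤ (1+ε) ^ γ * (γ+1) ^ ((γ+1)/γ) := by
    have h1 : (1:ℝ) ≤ (1+ε) ^ γ := by
      have := Real.rpow_le_rpow (by norm_num : (0:ℝ) ≤ 1)
        (show (1:ℝ) ≤ 1+ε by linarith) (by linarith : (0:ℝ) ≤ γ)
      rwa [Real.one_rpow] at this
    have h2 : (1:ℝ) ≤ (γ+1) ^ ((γ+1)/γ) := by
      have := Real.rpow_le_rpow (by norm_num : (0:ℝ) ≤ 1)
        (show (1:ℝ) ≤ γ+1 by linarith) (by positivity : (0:ℝ) ≤ (γ+1)/γ)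
      rwa [Real.one_rpow] at this
    nlinarith
  have hinv1 : 1 / ((1+ε) ^ γ * (γ+1) ^ ((γ+1)/γ)) ≤ 1 := by
    rw [div_le_one hαpos]; exact hα1
  -- rewrite the conjugate term
  rw [conj_eq ha hγ (by positivity : (0:ℝ) < 2/ε)]
  -- buyers' utilities are nonnegative
  have hu0 : ∀ i : Fin n,
      0 ≤ v i (S i) - ∑ j ∈ S i, a * (γ+1)^2 * ((soldCount S j ↑i : ℝ) + 1/ε) ^ γ := by
    intro i
    have h := hrun i ∅
    simp only [Finset.sum_empty, hv0 i, sub_zero] at h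
    linarith
  have hU0 : 0 ≤ ∑ i, (v i (S i) - ∑ j ∈ S i, a * (γ+1)^2 * ((soldCount S j ↑i : ℝ) + 1/ε) ^ γ) :=
    Finset.sum_nonneg (fun i _ => hu0 i)
  -- prices are monotone in time
  have hmono : ∀ (j : Fin m) (i : Fin n),
      a * (γ+1)^2 * ((soldCount S j ↑i : ℝ) + 1/ε) ^ γ
        ≤ a * (γ+1)^2 * ((soldCount S j n : ℝ) + 1/ε) ^ γ := by
    intro j i
    apply mul_le_mul_of_nonneg_left _ (by positivity)
    apply Real.rpow_le_rpow (by positivity) _ (by linarith)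
    have h1 : soldCount S j ↑i ≤ soldCount S j n := soldCount_le S j ↑i n i.isLt.le
    have h2 : ((soldCount S j ↑i : ℕ) : ℝ) ≤ ((soldCount S j n : ℕ) : ℝ) := Nat.cast_le.mpr h1
    linarith
  -- revenue identity
  have hRev : (∑ i, ∑ j ∈ S i, a * (γ+1)^2 * ((soldCount S j ↑i : ℝ) + 1/ε) ^ γ)
      = ∑ j, ∑ s ∈ Finset.range (soldCount S j n), a * (γ+1)^2 * ((s:ℝ) + 1/ε) ^ γ := by
    have h1 : ∀ i : Fin n, ∑ j ∈ S i, a * (γ+1)^2 * ((soldCount S j ↑i : ℝ) + 1/ε) ^ γ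
        = ∑ j : Fin m, if j ∈ S i then a * (γ+1)^2 * ((soldCount S j ↑i : ℝ) + 1/ε) ^ γ else 0 := by
      intro i
      rw [Finset.sum_ite_mem, Finset.univ_inter]
    simp_rw [h1]
    rw [Finset.sum_comm]
    apply Finset.sum_congr rfl
    intro j _
    rw [← Finset.sum_filter]
    exact soldCount_sum S j (fun s => a * (γ+1)^2 * ((s:ℝ) + 1/ε) ^ γ)
  -- welfare split
  have hsplitV : ∑ i, v i (S i)
      = (∑ i, (v i (S i) - ∑ j ∈ S i, a * (γ+1)^2 * ((soldCount S j ↑i : ℝ) + 1/ε) ^ γ))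
        + ∑ i, ∑ j ∈ S i, a * (γ+1)^2 * ((soldCount S j ↑i : ℝ) + 1/ε) ^ γ := by
    rw [← Finset.sum_add_distrib]
    apply Finset.sum_congr rfl
    intro i _
    ring
  -- buyer-by-buyer competitiveness
  have hbuyer : ∀ i : Fin n, ∑ T : Finset (Fin m), v i T * x i T
      ≤ (v i (S i) - ∑ j ∈ S i, a * (γ+1)^2 * ((soldCount S j ↑i : ℝ) + 1/ε) ^ γ)
        + ∑ T : Finset (Fin m), x i T *
            (∑ j ∈ T, a * (γ+1)^2 * ((soldCount S j n : ℝ) + 1/ε) ^ γ) := by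
    intro i
    have hstep : ∀ T : Finset (Fin m), v i T * x i T
        ≤ x i T * ((v i (S i) - ∑ j ∈ S i, a * (γ+1)^2 * ((soldCount S j ↑i : ℝ) + 1/ε) ^ γ)
            + ∑ j ∈ T, a * (γ+1)^2 * ((soldCount S j n : ℝ) + 1/ε) ^ γ) := by
      intro T
      rw [mul_comm]
      apply mul_le_mul_of_nonneg_left _ (hxnn i T)
      have h1 := hrun i T
      have h2 : ∑ j ∈ T, a * (γ+1)^2 * ((soldCount S j ↑i : ℝ) + 1/ε) ^ γ
          ≤ ∑ j ∈ T, a * (γ+1)^2 * ((soldCount S j n : ℝ) + 1/ε) ^ γ :=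
        Finset.sum_le_sum (fun j _ => hmono j i)
      linarith
    calc ∑ T : Finset (Fin m), v i T * x i T
        ≤ ∑ T : Finset (Fin m), x i T *
            ((v i (S i) - ∑ j ∈ S i, a * (γ+1)^2 * ((soldCount S j ↑i : ℝ) + 1/ε) ^ γ)
              + ∑ j ∈ T, a * (γ+1)^2 * ((soldCount S j n : ℝ) + 1/ε) ^ γ) :=
          Finset.sum_le_sum (fun T _ => hstep T)
      _ = (∑ T : Finset (Fin m), x i T) *
            (v i (S i) - ∑ j ∈ S i, a * (γ+1)^2 * ((soldCount S j ↑i : ℝ) + 1/ε) ^ γ)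
          + ∑ T : Finset (Fin m), x i T *
              (∑ j ∈ T, a * (γ+1)^2 * ((soldCount S j n : ℝ) + 1/ε) ^ γ) := by
          simp_rw [mul_add]
          rw [Finset.sum_add_distrib, ← Finset.sum_mul]
      _ ≤ 1 * (v i (S i) - ∑ j ∈ S i, a * (γ+1)^2 * ((soldCount S j ↑i : ℝ) + 1/ε) ^ γ)
          + ∑ T : Finset (Fin m), x i T *
              (∑ j ∈ T, a * (γ+1)^2 * ((soldCount S j n : ℝ) + 1/ε) ^ γ) := by
          apply add_le_add_left
          exact mul_le_mul_of_nonneg_right (hxle i) (hu0 i)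
      _ = _ := by rw [one_mul]
  -- swap of the fractional load sum
  have hswap : ∑ i, ∑ T : Finset (Fin m), x i T *
        (∑ j ∈ T, a * (γ+1)^2 * ((soldCount S j n : ℝ) + 1/ε) ^ γ)
      = ∑ j, (∑ i, ∑ T ∈ Finset.univ.filter (fun T : Finset (Fin m) => j ∈ T), x i T) *
          (a * (γ+1)^2 * ((soldCount S j n : ℝ) + 1/ε) ^ γ) := by
    have h1 : ∀ (i : Fin n) (T : Finset (Fin m)), x i T *
          (∑ j ∈ T, a * (γ+1)^2 * ((soldCount S j n : ℝ) + 1/ε) ^ γ)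
        = ∑ j : Fin m, if j ∈ T then x i T * (a * (γ+1)^2 * ((soldCount S j n : ℝ) + 1/ε) ^ γ)
            else 0 := by
      intro i T
      rw [Finset.sum_ite_mem, Finset.univ_inter, Finset.mul_sum]
    simp_rw [h1]
    have h2 : ∀ i : Fin n, ∑ T : Finset (Fin m), ∑ j : Fin m,
          (if j ∈ T then x i T * (a * (γ+1)^2 * ((soldCount S j n : ℝ) + 1/ε) ^ γ) else 0)
        = ∑ j : Fin m, ∑ T : Finset (Fin m),
          (if j ∈ T then x i T * (a * (γ+1)^2 * ((soldCount S j n : ℝ) + 1/ε) ^ γ) else 0) :=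
      fun i => Finset.sum_comm
    simp_rw [h2]
    rw [Finset.sum_comm]
    apply Finset.sum_congr rfl
    intro j _
    rw [Finset.sum_mul]
    apply Finset.sum_congr rfl
    intro i _
    rw [← Finset.sum_filter, Finset.sum_mul]
  -- aggregate buyers' inequality
  have hV : ∑ i, ∑ T : Finset (Fin m), v i T * x i T
      ≤ (∑ i, (v i (S i) - ∑ j ∈ S i, a * (γ+1)^2 * ((soldCount S j ↑i : ℝ) + 1/ε) ^ γ))
        + ∑ j, (∑ i, ∑ T ∈ Finset.univ.filter (fun T : Finset (Fin m) => j ∈ T), x i T) *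
            (a * (γ+1)^2 * ((soldCount S j n : ℝ) + 1/ε) ^ γ) := by
    rw [← hswap, ← Finset.sum_add_distrib]
    exact Finset.sum_le_sum (fun i _ => hbuyer i)
  -- the per-item bound, summed over items
  have hyy0 : ∀ j : Fin m,
      0 ≤ ∑ i, ∑ T ∈ Finset.univ.filter (fun T : Finset (Fin m) => j ∈ T), x i T :=
    fun j => Finset.sum_nonneg (fun i _ => Finset.sum_nonneg (fun T _ => hxnn i T))
  have hPer : ∀ j : Fin m,
      (1 / ((1+ε) ^ γ * (γ+1) ^ ((γ+1)/γ))) *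
          ((∑ i, ∑ T ∈ Finset.univ.filter (fun T : Finset (Fin m) => j ∈ T), x i T) *
              (a * (γ+1)^2 * ((soldCount S j n : ℝ) + 1/ε) ^ γ)
            - a * (∑ i, ∑ T ∈ Finset.univ.filter (fun T : Finset (Fin m) => j ∈ T), x i T) ^ (γ+1))
        - ((1 / ((1+ε) ^ γ * (γ+1) ^ ((γ+1)/γ))) * (γ * a * (2/ε) ^ (γ+1))
            + a * (1/ε - 1) ^ (γ+1))
      ≤ (∑ s ∈ Finset.range (soldCount S j n), a * (γ+1)^2 * ((s:ℝ) + 1/ε) ^ γ)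
        - a * ((soldCount S j n : ℝ)) ^ (γ+1) :=
    fun j => peritem ha hγ hε0 hε1 (soldCount S j n) _ (hyy0 j)
  have hPerSum := Finset.sum_le_sum (fun j (_ : j ∈ (univ : Finset (Fin m))) => hPer j)
  rw [Finset.sum_sub_distrib, Finset.sum_sub_distrib] at hPerSum
  have e1 : ∑ j : Fin m, (1 / ((1+ε) ^ γ * (γ+1) ^ ((γ+1)/γ))) *
        ((∑ i, ∑ T ∈ Finset.univ.filter (fun T : Finset (Fin m) => j ∈ T), x i T) *
            (a * (γ+1)^2 * ((soldCount S j n : ℝ) + 1/ε) ^ γ)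
          - a * (∑ i, ∑ T ∈ Finset.univ.filter (fun T : Finset (Fin m) => j ∈ T), x i T) ^ (γ+1))
      = (1 / ((1+ε) ^ γ * (γ+1) ^ ((γ+1)/γ))) *
        ((∑ j, (∑ i, ∑ T ∈ Finset.univ.filter (fun T : Finset (Fin m) => j ∈ T), x i T) *
            (a * (γ+1)^2 * ((soldCount S j n : ℝ) + 1/ε) ^ γ))
          - ∑ j, a * (∑ i, ∑ T ∈ Finset.univ.filter (fun T : Finset (Fin m) => j ∈ T), x i T) ^ (γ+1)) := by
    rw [← Finset.sum_sub_distrib, Finset.mul_sum]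
  have e3 : ∑ _j : Fin m, ((1 / ((1+ε) ^ γ * (γ+1) ^ ((γ+1)/γ))) * (γ * a * (2/ε) ^ (γ+1))
        + a * (1/ε - 1) ^ (γ+1))
      = (m:ℝ) * ((1 / ((1+ε) ^ γ * (γ+1) ^ ((γ+1)/γ))) * (γ * a * (2/ε) ^ (γ+1))
        + a * (1/ε - 1) ^ (γ+1)) := by
    rw [Finset.sum_const, Finset.card_univ, Fintype.card_fin, nsmul_eq_mul]
  rw [e1, e3] at hPerSum
  -- final assembly
  rw [ge_iff_le, hsplitV, hRev]
  have hVmul := mul_le_mul_of_nonneg_left hV hinv0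
  have hUmul := mul_le_of_le_one_left hU0 hinv1
  linarith [hPerSum, hVmul, hUmul, hU0]
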